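/- The fixed-penalty matching distance d_{M,ρ} with penalty ρ > 0 satisfies the triangle inequality: d_{M,ρ}(X,Y) ≤ d_{M,ρ}(X,Z) + d_{M,ρ}(Z,Y) for all finite multisets X, Y, Z over a metric space. -/
import Mathlib


/-- `M` is a matching of the multisets `A` and `B`: a multiset of pairs `(x, y)` with
`x ∈ A`, `y ∈ B`, using each element of `A` and of `B` at most once, counting
multiplicity. -/
def IsMatching {α : Type*} (A B : Multiset α) (M : Multiset (α × α)) : Prop :=
  M.map Prod.fst ≤ A ∧ M.map Prod.snd ≤ B

/-- Cost of a matching `M` for the fixed-penalty matching distance: sum of pairwise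
distances of matched elements plus `ρ` for each unmatched element. -/
noncomputable def fpMatchingCost {α : Type*} [MetricSpace α] (ρ : ℝ)
    (A B : Multiset α) (M : Multiset (α × α)) : ℝ :=
  (M.map fun p => dist p.1 p.2).sum
    + ρ * ((A.card : ℝ) + (B.card : ℝ) - 2 * (M.card : ℝ))

/-- The fixed-penalty matching distance `d_{M,ρ}`: minimal cost over all matchings. -/
noncomputable def dFPMatch {α : Type*} [MetricSpace α] (ρ : ℝ) (A B : Multiset α) : ℝ :=
  sInf {c | ∃ M, IsMatching A B M ∧ c = fpMatchingCost ρ A B M}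

theorem compose_matching {α : Type*} [MetricSpace α] :
    ∀ (M N : Multiset (α × α)) (C : Multiset α),
      M.map Prod.snd ≤ C → N.map Prod.fst ≤ C →
      ∃ P : Multiset (α × α),
        P.map Prod.fst ≤ M.map Prod.fst ∧
        P.map Prod.snd ≤ N.map Prod.snd ∧
        (P.map fun p => dist p.1 p.2).sum ≤
          (M.map fun p => dist p.1 p.2).sum + (N.map fun p => dist p.1 p.2).sum ∧
        M.card + N.card ≤ C.card + P.card := by
  intro M
  induction M using Multiset.induction with
  | empty =>
    intro N C _ hN
    refine ⟨0, by simp, by simp, ?_, ?_⟩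
    · simp only [Multiset.map_zero, Multiset.sum_zero, zero_add]
      refine Multiset.sum_nonneg ?_
      intro x hx
      obtain ⟨p, _, rfl⟩ := Multiset.mem_map.mp hx
      exact dist_nonneg
    · have := Multiset.card_le_card hN
      simpa using this
  | cons p M' ih =>
    obtain ⟨a, c⟩ := p
    intro N C hM hN
    classical
    have hMsnd : (c ::ₘ M'.map Prod.snd) ≤ C := by simpa using hM
    have hM' : M'.map Prod.snd ≤ C.erase c := by
      have := Multiset.erase_le_erase c hMsnd
      simpa using this
    have hcC : c ∈ C := Multiset.mem_of_le hMsnd (Multiset.mem_cons_self _ _)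
    by_cases hc : c ∈ N.map Prod.fst
    · obtain ⟨q, hqN, hq1⟩ := Multiset.mem_map.mp hc
      have hNq : N = q ::ₘ N.erase q := (Multiset.cons_erase hqN).symm
      have hNmap : N.map Prod.fst = c ::ₘ (N.erase q).map Prod.fst := by
        conv_lhs => rw [hNq]
        simp [hq1]
      have hN' : (N.erase q).map Prod.fst ≤ C.erase c := by
        have := Multiset.erase_le_erase c (hNmap ▸ hN)
        simpa using this
      obtain ⟨P, h1, h2, h3, h4⟩ := ih (N.erase q) (C.erase c) hM' hN'
      refine ⟨(a, q.2) ::ₘ P, ?_, ?_, ?_, ?_⟩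
      · simpa using Multiset.cons_le_cons a h1
      · have : ((a, q.2) ::ₘ P).map Prod.snd = q.2 ::ₘ P.map Prod.snd := by simp
        rw [this, hNq]
        simpa using Multiset.cons_le_cons q.2 h2
      · have hd : dist a q.2 ≤ dist a c + dist c q.2 := dist_triangle _ _ _
        have hNsum : (N.map fun p => dist p.1 p.2).sum
            = dist c q.2 + ((N.erase q).map fun p => dist p.1 p.2).sum := by
          conv_lhs => rw [hNq]
          simp [hq1]
        simp only [Multiset.map_cons, Multiset.sum_cons, hNsum]
        linarith
      · have hCcard : (C.erase c).card = C.card - 1 := Multiset.card_erase_of_mem hcC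
        have hNcard : (N.erase q).card = N.card - 1 := Multiset.card_erase_of_mem hqN
        have hC1 : 1 ≤ C.card := Multiset.card_pos.mpr (fun h => by simp [h] at hcC)
        have hN1 : 1 ≤ N.card := Multiset.card_pos.mpr (fun h => by simp [h] at hqN)
        simp only [Multiset.card_cons]
        omega
    · have hN' : N.map Prod.fst ≤ C.erase c := by
        rw [Multiset.le_iff_count] at hN ⊢
        intro x
        rcases eq_or_ne x c with rfl | hx
        · simp [Multiset.count_eq_zero_of_notMem hc]
        · rw [Multiset.count_erase_of_ne hx]
          exact hN x
      obtain ⟨P, h1, h2, h3, h4⟩ := ih N (C.erase c) hM' hN'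
      refine ⟨P, ?_, h2, ?_, ?_⟩
      · refine h1.trans ?_
        simpa using Multiset.le_cons_self (M'.map Prod.fst) a
      · have : (0:ℝ) ≤ dist a c := dist_nonneg
        simp only [Multiset.map_cons, Multiset.sum_cons]
        linarith
      · have hCcard : (C.erase c).card = C.card - 1 := Multiset.card_erase_of_mem hcC
        have hC1 : 1 ≤ C.card := Multiset.card_pos.mpr (fun h => by simp [h] at hcC)
        simp only [Multiset.card_cons]
        omega

theorem fpMatchingCost_nonneg {α : Type*} [MetricSpace α] {ρ : ℝ} (hρ : 0 ≤ ρ)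
    {A B : Multiset α} {M : Multiset (α × α)} (hM : IsMatching A B M) :
    0 ≤ fpMatchingCost ρ A B M := by
  obtain ⟨h1, h2⟩ := hM
  have hMA : M.card ≤ A.card := by simpa using Multiset.card_le_card h1
  have hMB : M.card ≤ B.card := by simpa using Multiset.card_le_card h2
  have hsum : 0 ≤ (M.map fun p => dist p.1 p.2).sum := by
    refine Multiset.sum_nonneg ?_
    intro x hx
    obtain ⟨p, _, rfl⟩ := Multiset.mem_map.mp hx
    exact dist_nonneg
  have : (0:ℝ) ≤ (A.card : ℝ) + (B.card : ℝ) - 2 * (M.card : ℝ) := by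
    have h1 : (M.card : ℝ) ≤ (A.card : ℝ) := by exact_mod_cast hMA
    have h2 : (M.card : ℝ) ≤ (B.card : ℝ) := by exact_mod_cast hMB
    linarith
  have := mul_nonneg hρ this
  unfold fpMatchingCost
  linarith

/-- The fixed-penalty matching distance satisfies the triangle inequality. -/
theorem dFPMatch_triangle {α : Type*} [MetricSpace α] (ρ : ℝ) (hρ : 0 < ρ)
    (A B C : Multiset α) :
    dFPMatch ρ A B ≤ dFPMatch ρ A C + dFPMatch ρ C B := by
  set S1 := {c | ∃ M, IsMatching A C M ∧ c = fpMatchingCost ρ A C M} with hS1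
  set S2 := {c | ∃ M, IsMatching C B M ∧ c = fpMatchingCost ρ C B M} with hS2
  set S0 := {c | ∃ M, IsMatching A B M ∧ c = fpMatchingCost ρ A B M} with hS0
  have hne1 : S1.Nonempty := ⟨_, 0, ⟨by simp [IsMatching], rfl⟩⟩
  have hne2 : S2.Nonempty := ⟨_, 0, ⟨by simp [IsMatching], rfl⟩⟩
  have hbdd0 : BddBelow S0 := ⟨0, fun c ⟨M, hM, hc⟩ => hc ▸ fpMatchingCost_nonneg hρ.le hM⟩
  have key : ∀ c1 ∈ S1, ∀ c2 ∈ S2, dFPMatch ρ A B ≤ c1 + c2 := by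
    rintro c1 ⟨M, ⟨hMA, hMC⟩, rfl⟩ c2 ⟨N, ⟨hNC, hNB⟩, rfl⟩
    obtain ⟨P, h1, h2, h3, h4⟩ := compose_matching M N C hMC hNC
    have hP : IsMatching A B P := ⟨h1.trans hMA, h2.trans hNB⟩
    have step1 : dFPMatch ρ A B ≤ fpMatchingCost ρ A B P :=
      csInf_le hbdd0 ⟨P, hP, rfl⟩
    refine step1.trans ?_
    unfold fpMatchingCost
    have hcard : (M.card : ℝ) + (N.card : ℝ) ≤ (C.card : ℝ) + (P.card : ℝ) := by
      exact_mod_cast h4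
    have hmul := mul_le_mul_of_nonneg_left
      (show (A.card : ℝ) + (B.card : ℝ) - 2 * (P.card : ℝ) ≤
        ((A.card : ℝ) + (C.card : ℝ) - 2 * (M.card : ℝ))
          + ((C.card : ℝ) + (B.card : ℝ) - 2 * (N.card : ℝ)) by linarith) hρ.le
    rw [mul_add] at hmul
    linarith
  have h1 : dFPMatch ρ A B - dFPMatch ρ C B ≤ dFPMatch ρ A C := by
    refine le_csInf hne1 ?_
    intro c1 hc1
    rw [sub_le_iff_le_add, add_comm]
    have : dFPMatch ρ A B - c1 ≤ dFPMatch ρ C B := by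
      refine le_csInf hne2 ?_
      intro c2 hc2
      rw [sub_le_iff_le_add, add_comm]
      exact key c1 hc1 c2 hc2
    linarith
  linarith
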